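/- Let B be a unital K-algebra with an involution σ and q∈K nonzero. Then the linear map P : C(K,q)⊗B → B⊗C(K,q) defined by P(1⊗b) = b⊗1 and P(v⊗b) = σ(b)⊗v satisfies the mirror conditions (aatm1)–(aatm3) with C = B, D = C(K,q), and the linear map a+bv ↦ a⊗1 + b⊗v is an isomorphism of unital algebras from the algebra B̲(q) onto B⊗̲_P C(K,q). -/

import Mathlib

open TensorProduct LinearMap

section MirrorPreamble

variable (K : Type*) [Field K]
variable (C : Type*) [NonAssocRing C] [Module K C] [SMulCommClass K C C] [IsScalarTower K C C]
variable (D : Type*) [NonAssocRing D] [Module K D] [SMulCommClass K D D] [IsScalarTower K D D]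

/-- Sweedler helper: sends `Σ cP ⊗ dP` in `C ⊗ D` to `Σ (c'_p * cP) ⊗ (dP)_p`,
where `P((dP) ⊗ c') = c'_p ⊗ (dP)_p`. -/
noncomputable def mirrorPc (P : D ⊗[K] C →ₗ[K] C ⊗[K] D) (c' : C) :
    C ⊗[K] D →ₗ[K] C ⊗[K] D :=
  (LinearMap.rTensor D ((LinearMap.mul' K C) ∘ₗ (TensorProduct.comm K C C).toLinearMap)) ∘ₗ
    (TensorProduct.assoc K C C D).symm.toLinearMap ∘ₗ
    (LinearMap.lTensor C (P ∘ₗ (TensorProduct.mk K D C).flip c'))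

/-- Sweedler helper: sends `Σ cP ⊗ d'P` in `C ⊗ D` to `Σ (cP)_p ⊗ (d_p * d'P)`,
where `P(d ⊗ cP) = (cP)_p ⊗ d_p`. -/
noncomputable def mirrorPd (P : D ⊗[K] C →ₗ[K] C ⊗[K] D) (d : D) :
    C ⊗[K] D →ₗ[K] C ⊗[K] D :=
  (LinearMap.lTensor C (LinearMap.mul' K D)) ∘ₗ
    (TensorProduct.assoc K C D D).toLinearMap ∘ₗ
    (LinearMap.rTensor D (P ∘ₗ (TensorProduct.mk K D C) d))

/-- `P : D ⊗ C → C ⊗ D` satisfies the mirror conditions (aatm1)–(aatm3) w.r.t. the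
decomposition `D = K·1_D ⊕ D₀`. -/
def IsMirrorTwistingMap (D₀ : Submodule K D) (P : D ⊗[K] C →ₗ[K] C ⊗[K] D) : Prop :=
  (∀ c : C, P ((1 : D) ⊗ₜ[K] c) = c ⊗ₜ[K] (1 : D)) ∧
  (∀ d : D, P (d ⊗ₜ[K] (1 : C)) = (1 : C) ⊗ₜ[K] d) ∧
  (∀ d ∈ D₀, ∀ c c' : C, P (d ⊗ₜ[K] (c * c')) = mirrorPc K C D P c' (P (d ⊗ₜ[K] c))) ∧
  (∀ (c : C) (d d' : D), P ((d * d') ⊗ₜ[K] c) = mirrorPd K C D P d (P (d' ⊗ₜ[K] c)))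

/-- `m` is the multiplication of the mirror product `C ⊗̲_P D`:
`(c⊗d)(c'⊗1) = c c'_P ⊗ d_P` and, for `d' ∈ D₀`, `(c⊗d)(c'⊗d') = c'_P c ⊗ d_P d'`. -/
def IsMirrorMul (D₀ : Submodule K D) (P : D ⊗[K] C →ₗ[K] C ⊗[K] D)
    (m : C ⊗[K] D →ₗ[K] C ⊗[K] D →ₗ[K] C ⊗[K] D) : Prop :=
  (∀ (c : C) (d : D) (c' : C),
      m (c ⊗ₜ[K] d) (c' ⊗ₜ[K] (1 : D)) =
        (LinearMap.rTensor D (LinearMap.mulLeft K c)) (P (d ⊗ₜ[K] c'))) ∧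
  (∀ d' ∈ D₀, ∀ (c : C) (d : D) (c' : C),
      m (c ⊗ₜ[K] d) (c' ⊗ₜ[K] d') =
        (TensorProduct.map (LinearMap.mulRight K c) (LinearMap.mulRight K d'))
          (P (d ⊗ₜ[K] c')))

end MirrorPreamble

/-- The multiplication of the algebra `B̲(q)`, on `B ⊕ B` with `a + bv ↔ (a, b)`:
`(a+bv)(c+dv) = (ac + qσ(d)b) + (bσ(c) + da)v`. -/
def uMul (K B : Type*) [Field K] [NonAssocRing B] [Module K B]
    (σ : B →ₗ[K] B) (q : K) : B × B → B × B → B × B :=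
  fun x y => (x.1 * y.1 + q • (σ y.2 * x.2), x.2 * σ y.1 + y.2 * x.1)

/-- The linear map `B̲(q) → B ⊗ C(K,q)`, `a + bv ↦ a ⊗ 1 + b ⊗ v`. -/
noncomputable def uToTensor (K B : Type*) [Field K] [NonAssocRing B] [Module K B]
    (q : K) :
    B × B →ₗ[K] B ⊗[K] (AdjoinRoot (Polynomial.X ^ 2 - Polynomial.C q)) :=
  ((TensorProduct.mk K B (AdjoinRoot (Polynomial.X ^ 2 - Polynomial.C q))).flip 1) ∘ₗ
      (LinearMap.fst K B B) +
  ((TensorProduct.mk K B (AdjoinRoot (Polynomial.X ^ 2 - Polynomial.C q))).flip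
      (AdjoinRoot.root (Polynomial.X ^ 2 - Polynomial.C q))) ∘ₗ (LinearMap.snd K B B)


section AuxGeneric

variable (K : Type*) [Field K]
variable (C : Type*) [NonAssocRing C] [Module K C] [SMulCommClass K C C] [IsScalarTower K C C]
variable (D : Type*) [NonAssocRing D] [Module K D] [SMulCommClass K D D] [IsScalarTower K D D]

lemma mirrorPd_pure (P : D ⊗[K] C →ₗ[K] C ⊗[K] D) (d : D) (c : C) (e : D)
    (u : C) (w : D) (h : P (d ⊗ₜ[K] c) = u ⊗ₜ[K] w) :
    mirrorPd K C D P d (c ⊗ₜ[K] e) = u ⊗ₜ[K] (w * e) := by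
  simp [mirrorPd, h]

lemma mirrorPd_tmul_one (P : D ⊗[K] C →ₗ[K] C ⊗[K] D) (d : D) (c : C) :
    mirrorPd K C D P d (c ⊗ₜ[K] (1 : D)) = P (d ⊗ₜ[K] c) := by
  have key : ∀ t : C ⊗[K] D,
      (LinearMap.lTensor C (LinearMap.mul' K D))
        ((TensorProduct.assoc K C D D) (t ⊗ₜ[K] (1 : D))) = t := by
    intro t
    induction t using TensorProduct.induction_on with
    | zero => simp
    | tmul u w => simp
    | add t1 t2 h1 h2 => rw [add_tmul, map_add, map_add, h1, h2]
  simp only [mirrorPd, LinearMap.comp_apply, LinearEquiv.coe_coe,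
    LinearMap.rTensor_tmul, TensorProduct.mk_apply]
  exact key _

lemma mirrorPd_smul_add (P : D ⊗[K] C →ₗ[K] C ⊗[K] D) (a b : K) (d₁ d₂ : D)
    (x : C ⊗[K] D) :
    mirrorPd K C D P (a • d₁ + b • d₂) x =
      a • mirrorPd K C D P d₁ x + b • mirrorPd K C D P d₂ x := by
  induction x using TensorProduct.induction_on with
  | zero => simp
  | tmul c e =>
      simp only [mirrorPd, LinearMap.comp_apply, LinearEquiv.coe_coe,
        LinearMap.rTensor_tmul, TensorProduct.mk_apply, LinearMap.add_apply,
        LinearMap.smul_apply, map_add, map_smul, add_tmul, smul_tmul']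
      simp only [← TensorProduct.smul_tmul', map_smul]
  | add t1 t2 h1 h2 =>
      simp only [map_add, h1, h2, smul_add]; abel

end AuxGeneric

section AuxAdjoin
open Polynomial

variable {K : Type*} [Field K] (q : K)

lemma aux_vv : (AdjoinRoot.root (X ^ 2 - C q)) * (AdjoinRoot.root (X ^ 2 - C q))
    = q • (1 : AdjoinRoot (X ^ 2 - C q)) := by
  have h : (AdjoinRoot.mk (X ^ 2 - C q)) (X ^ 2 - C q) = 0 := AdjoinRoot.mk_self
  have h' : (AdjoinRoot.root (X ^ 2 - C q)) ^ 2 - algebraMap K (AdjoinRoot (X ^ 2 - C q)) q = 0 := by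
    simpa [map_sub, map_pow, AdjoinRoot.mk_X, AdjoinRoot.mk_C, AdjoinRoot.algebraMap_eq] using h
  have h2 : (AdjoinRoot.root (X ^ 2 - C q)) ^ 2 = algebraMap K (AdjoinRoot (X ^ 2 - C q)) q := by
    linear_combination (norm := ring_nf) h'
  calc (AdjoinRoot.root (X ^ 2 - C q)) * (AdjoinRoot.root (X ^ 2 - C q))
      = (AdjoinRoot.root (X ^ 2 - C q)) ^ 2 := by ring
  _ = q • 1 := by rw [h2, Algebra.algebraMap_eq_smul_one]

lemma aux_dec (d : AdjoinRoot (X ^ 2 - C q)) :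
    ∃ a b : K, d = a • 1 + b • (AdjoinRoot.root (X ^ 2 - C q)) := by
  obtain ⟨p, rfl⟩ := AdjoinRoot.mk_surjective (g := X ^ 2 - C q) d
  have hm : (X ^ 2 - C q : K[X]).Monic := monic_X_pow_sub_C q two_ne_zero
  have hdeg : (p %ₘ (X ^ 2 - C q)).degree ≤ 1 := by
    have := degree_modByMonic_lt p hm
    rw [degree_X_pow_sub_C (by norm_num) q] at this
    exact Order.lt_succ_iff.mp (by exact_mod_cast this)
  refine ⟨(p %ₘ (X ^ 2 - C q)).coeff 0, (p %ₘ (X ^ 2 - C q)).coeff 1, ?_⟩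
  conv_lhs => rw [← modByMonic_add_div p (X ^ 2 - C q)]
  rw [eq_X_add_C_of_degree_le_one hdeg]
  simp [map_add, map_mul, AdjoinRoot.mk_X, AdjoinRoot.mk_C, AdjoinRoot.mk_self,
    ← AdjoinRoot.algebraMap_eq, Algebra.algebraMap_eq_smul_one, smul_mul_assoc, add_comm]

lemma aux_coords : ∃ φ0 φ1 : AdjoinRoot (X ^ 2 - C q) →ₗ[K] K,
    φ0 1 = 1 ∧ φ0 (AdjoinRoot.root (X ^ 2 - C q)) = 0 ∧
    φ1 1 = 0 ∧ φ1 (AdjoinRoot.root (X ^ 2 - C q)) = 1 := by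
  have hm : (X ^ 2 - C q : K[X]).Monic := monic_X_pow_sub_C q two_ne_zero
  let pb := AdjoinRoot.powerBasis' hm
  have hdim : pb.dim = 2 := by
    simp [pb, AdjoinRoot.powerBasis'_dim, natDegree_X_pow_sub_C]
  have h0 : (0 : ℕ) < pb.dim := by omega
  have h1 : (1 : ℕ) < pb.dim := by omega
  have hb0 : pb.basis ⟨0, h0⟩ = 1 := by rw [PowerBasis.basis_eq_pow]; simp
  have hb1 : pb.basis ⟨1, h1⟩ = AdjoinRoot.root (X ^ 2 - C q) := by
    rw [PowerBasis.basis_eq_pow]; simp [pb, AdjoinRoot.powerBasis'_gen]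
  have hne : (⟨0, h0⟩ : Fin pb.dim) ≠ ⟨1, h1⟩ := by simp
  refine ⟨pb.basis.coord ⟨0, h0⟩, pb.basis.coord ⟨1, h1⟩, ?_, ?_, ?_, ?_⟩
  · rw [Module.Basis.coord_apply, ← hb0, Module.Basis.repr_self]; simp
  · rw [← hb1, Module.Basis.coord_apply, Module.Basis.repr_self, Finsupp.single_apply_eq_zero]
    simp [hne.symm]
  · rw [← hb0, Module.Basis.coord_apply, Module.Basis.repr_self, Finsupp.single_apply_eq_zero]
    simp [hne]
  · rw [Module.Basis.coord_apply, ← hb1, Module.Basis.repr_self]; simp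

end AuxAdjoin

lemma uToTensor_apply (K B : Type*) [Field K] [NonAssocRing B] [Module K B]
    (q : K) (a b : B) :
    uToTensor K B q (a, b) = a ⊗ₜ[K] (1 : AdjoinRoot (Polynomial.X ^ 2 - Polynomial.C q))
      + b ⊗ₜ[K] (AdjoinRoot.root (Polynomial.X ^ 2 - Polynomial.C q)) := by
  simp [uToTensor]

set_option maxHeartbeats 2000000 in
/-- the map `P : C(K,q) ⊗ B → B ⊗ C(K,q)` with `P(1⊗b) = b⊗1`,
`P(v⊗b) = σ(b)⊗v` satisfies the mirror conditions (aatm1)–(aatm3), and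
`a + bv ↦ a⊗1 + b⊗v` is an isomorphism of unital algebras `B̲(q) ≅ B ⊗̲_P C(K,q)`. -/
theorem stmt7 (K B : Type*) [Field K]
    [NonAssocRing B] [Module K B] [SMulCommClass K B B] [IsScalarTower K B B]
    (σ : B →ₗ[K] B) (hσmul : ∀ x y : B, σ (x * y) = σ y * σ x)
    (hσone : σ 1 = 1) (hσinv : ∀ x : B, σ (σ x) = x)
    (q : K) (hq : q ≠ 0)
    (P : (AdjoinRoot (Polynomial.X ^ 2 - Polynomial.C q)) ⊗[K] B →ₗ[K]
         B ⊗[K] (AdjoinRoot (Polynomial.X ^ 2 - Polynomial.C q)))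
    (hP1 : ∀ b : B,
      P ((1 : AdjoinRoot (Polynomial.X ^ 2 - Polynomial.C q)) ⊗ₜ[K] b) = b ⊗ₜ[K] 1)
    (hPv : ∀ b : B,
      P ((AdjoinRoot.root (Polynomial.X ^ 2 - Polynomial.C q)) ⊗ₜ[K] b) =
        σ b ⊗ₜ[K] AdjoinRoot.root (Polynomial.X ^ 2 - Polynomial.C q))
    (m : B ⊗[K] (AdjoinRoot (Polynomial.X ^ 2 - Polynomial.C q)) →ₗ[K]
         B ⊗[K] (AdjoinRoot (Polynomial.X ^ 2 - Polynomial.C q)) →ₗ[K]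
         B ⊗[K] (AdjoinRoot (Polynomial.X ^ 2 - Polynomial.C q)))
    (hm : IsMirrorMul K B (AdjoinRoot (Polynomial.X ^ 2 - Polynomial.C q))
      (Submodule.span K {AdjoinRoot.root (Polynomial.X ^ 2 - Polynomial.C q : Polynomial K)}) P m) :
    IsMirrorTwistingMap K B (AdjoinRoot (Polynomial.X ^ 2 - Polynomial.C q))
      (Submodule.span K {AdjoinRoot.root (Polynomial.X ^ 2 - Polynomial.C q : Polynomial K)}) P ∧
    Function.Bijective (uToTensor K B q) ∧
    uToTensor K B q ((1 : B), (0 : B)) =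
      (1 : B) ⊗ₜ[K] (1 : AdjoinRoot (Polynomial.X ^ 2 - Polynomial.C q)) ∧
    (∀ x y : B × B,
      uToTensor K B q (uMul K B σ q x y) = m (uToTensor K B q x) (uToTensor K B q y)) := by
  have hvv := aux_vv q
  have hmemv : AdjoinRoot.root (Polynomial.X ^ 2 - Polynomial.C q) ∈
      Submodule.span K {AdjoinRoot.root (Polynomial.X ^ 2 - Polynomial.C q)} :=
    Submodule.mem_span_singleton_self _
  refine ⟨⟨hP1, ?_, ?_, ?_⟩, ?_, ?_, ?_⟩
  · -- (aatm1b) P (d ⊗ 1) = 1 ⊗ d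
    intro d
    obtain ⟨a, b, rfl⟩ := aux_dec q d
    simp only [add_tmul, ← TensorProduct.smul_tmul', map_add, map_smul, hP1, hPv,
      hσone, TensorProduct.tmul_add, TensorProduct.tmul_smul]
  · -- (aatm2)
    intro d hd c c'
    rw [Submodule.mem_span_singleton] at hd
    obtain ⟨k, rfl⟩ := hd
    simp only [← TensorProduct.smul_tmul', map_smul, hPv, hσmul]
    congr 1
    simp [mirrorPc, hPv]
  · -- (aatm3)
    intro c d d'
    obtain ⟨a, b, rfl⟩ := aux_dec q d'
    simp only [mul_add, mul_smul_comm, mul_one, add_tmul, ← TensorProduct.smul_tmul',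
      map_add, map_smul, hP1, hPv]
    congr 1
    · rw [mirrorPd_tmul_one]
    · congr 1
      obtain ⟨α, β, rfl⟩ := aux_dec q d
      have h1 : mirrorPd K B (AdjoinRoot (Polynomial.X ^ 2 - Polynomial.C q)) P 1
          (σ c ⊗ₜ[K] AdjoinRoot.root (Polynomial.X ^ 2 - Polynomial.C q)) =
          σ c ⊗ₜ[K] AdjoinRoot.root (Polynomial.X ^ 2 - Polynomial.C q) := by
        rw [mirrorPd_pure (h := hP1 (σ c)), one_mul]
      have h2 : mirrorPd K B (AdjoinRoot (Polynomial.X ^ 2 - Polynomial.C q)) P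
          (AdjoinRoot.root (Polynomial.X ^ 2 - Polynomial.C q))
          (σ c ⊗ₜ[K] AdjoinRoot.root (Polynomial.X ^ 2 - Polynomial.C q)) =
          q • (c ⊗ₜ[K] 1) := by
        rw [mirrorPd_pure (h := hPv (σ c)), hσinv, hvv, TensorProduct.tmul_smul]
      rw [mirrorPd_smul_add, h1, h2, add_mul, smul_mul_assoc, smul_mul_assoc,
        one_mul, hvv]
      simp only [add_tmul, ← TensorProduct.smul_tmul', map_add, map_smul, hPv,
        hP1, smul_smul]
  · -- bijectivity
    obtain ⟨φ0, φ1, hφ00, hφ0v, hφ10, hφ1v⟩ := aux_coords q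
    set g : B ⊗[K] (AdjoinRoot (Polynomial.X ^ 2 - Polynomial.C q)) →ₗ[K] B × B :=
      LinearMap.prod
        ((TensorProduct.rid K B).toLinearMap ∘ₗ LinearMap.lTensor B φ0)
        ((TensorProduct.rid K B).toLinearMap ∘ₗ LinearMap.lTensor B φ1) with hg
    have hgt : ∀ (x : B) (e : AdjoinRoot (Polynomial.X ^ 2 - Polynomial.C q)),
        g (x ⊗ₜ[K] e) = (φ0 e • x, φ1 e • x) := by
      intro x e
      simp [hg]
    have hleft : Function.LeftInverse g (uToTensor K B q) := by
      rintro ⟨a, b⟩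
      rw [uToTensor_apply, map_add, hgt, hgt, hφ00, hφ0v, hφ10, hφ1v]
      simp
    have hright : Function.RightInverse g (uToTensor K B q) := by
      intro t
      induction t using TensorProduct.induction_on with
      | zero => simp
      | tmul x d =>
          obtain ⟨a, b, rfl⟩ := aux_dec q d
          rw [hgt, uToTensor_apply]
          simp only [map_add, map_smul, hφ00, hφ0v, hφ10, hφ1v, smul_zero,
            add_zero, zero_add, TensorProduct.tmul_add, TensorProduct.tmul_smul,
            ← TensorProduct.smul_tmul', smul_eq_mul, mul_one, mul_zero, zero_mul]
      | add t1 t2 h1 h2 => rw [map_add, map_add, h1, h2]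
    exact ⟨hleft.injective, hright.surjective⟩
  · -- unit
    rw [uToTensor_apply]
    simp
  · -- multiplicativity
    rintro ⟨a, b⟩ ⟨c, d⟩
    rw [uToTensor_apply, uToTensor_apply, uMul, uToTensor_apply]
    simp only [map_add, LinearMap.add_apply]
    rw [hm.1 a 1 c, hm.1 b (AdjoinRoot.root (Polynomial.X ^ 2 - Polynomial.C q)) c,
      hm.2 _ hmemv a 1 d, hm.2 _ hmemv b (AdjoinRoot.root (Polynomial.X ^ 2 - Polynomial.C q)) d,
      hP1, hPv, hP1, hPv]
    simp only [LinearMap.rTensor_tmul, TensorProduct.map_tmul,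
      LinearMap.mulLeft_apply, LinearMap.mulRight_apply, one_mul, hvv,
      TensorProduct.tmul_smul]
    simp only [add_tmul, ← TensorProduct.smul_tmul']
    abel
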